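/- Fix decisions y₀ < y₁ with E[u_A(y₀,θ)] = E[u_A(y₁,θ)], where θ_A satisfies θ_A + b(θ_A) = E[θ+b(θ)]. Suppose the agent, when informed of state θ, chooses y₁ over y₀ exactly when θ ≥ θ_A. Then the change in the principal's informed-agent payoff from adding decision y₁, namely E[(u_P(y₁,θ) − u_P(y₀,θ))·1{θ ≥ θ_A}], equals (E[θ | θ ≥ θ_A] − θ_A − b(θ_A))·(y₁ − y₀)·(1 − F(θ_A)), and this is nonnegative if and only if E[θ | θ ≥ θ_A] ≥ θ_A + b(θ_A). -/

import Mathlib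

open Set MeasureTheory

/-- Adding an ex-ante-indifferent decision `y₁` above `y₀`: the change in the principal's
informed-agent payoff equals `(E[θ | θ ≥ θ_A] − θ_A − b(θ_A))·(y₁ − y₀)·(1 − F(θ_A))`, and
is nonnegative iff `E[θ | θ ≥ θ_A] ≥ θ_A + b(θ_A)`. -/
theorem stmt_10 (a b : ℝ → ℝ)
    (μ : Measure ℝ) [IsProbabilityMeasure μ]
    (hbint : Integrable (fun θ => θ + b θ) μ)
    (hidint : Integrable (fun θ => θ) μ)
    (θA : ℝ) (hθA : θA + b θA = ∫ θ, (θ + b θ) ∂μ)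
    (hmass : 0 < (μ (Ici θA)).toReal)
    (y0 y1 : ℝ) (hlt : y0 < y1)
    (hconj : a y1 - a y0 = -(θA + b θA) * (y1 - y0)) :
    (∫ θ in Ici θA, ((θ * y1 + a y1) - (θ * y0 + a y0)) ∂μ)
      = ((∫ θ in Ici θA, θ ∂μ) / (μ (Ici θA)).toReal - θA - b θA)
        * (y1 - y0) * (μ (Ici θA)).toReal ∧
    (0 ≤ (∫ θ in Ici θA, ((θ * y1 + a y1) - (θ * y0 + a y0)) ∂μ)
      ↔ θA + b θA ≤ (∫ θ in Ici θA, θ ∂μ) / (μ (Ici θA)).toReal) := by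
  set M : ℝ := (μ (Ici θA)).toReal with hM
  set I : ℝ := ∫ θ in Ici θA, θ ∂μ with hI
  have hμne : μ (Ici θA) ≠ ⊤ := measure_ne_top _ _
  have hint : IntegrableOn (fun θ => θ) (Ici θA) μ := hidint.integrableOn
  have hkey : (∫ θ in Ici θA, ((θ * y1 + a y1) - (θ * y0 + a y0)) ∂μ)
      = (I - (θA + b θA) * M) * (y1 - y0) := by
    have h1 : ∀ θ : ℝ, (θ * y1 + a y1) - (θ * y0 + a y0)
        = θ * (y1 - y0) + (-(θA + b θA) * (y1 - y0)) := by
      intro θ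
      have : a y1 - a y0 = -(θA + b θA) * (y1 - y0) := hconj
      ring_nf
      linarith [this]
    simp_rw [h1]
    rw [integral_add (hint.mul_const _) (integrableOn_const hμne)]
    rw [integral_mul_const, setIntegral_const]
    rw [← hI, measureReal_def, ← hM]
    simp only [smul_eq_mul]
    ring
  constructor
  · rw [hkey]
    have h2 : I / M * M = I := div_mul_cancel₀ _ hmass.ne'
    nlinarith [h2]
  · rw [hkey]
    have hy : 0 < y1 - y0 := by linarith
    constructor
    · intro h
      have h2 : 0 ≤ I - (θA + b θA) * M := (mul_nonneg_iff_of_pos_right hy).mp h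
      rw [le_div_iff₀ hmass]
      linarith
    · intro h
      rw [le_div_iff₀ hmass] at h
      have : 0 ≤ I - (θA + b θA) * M := by linarith
      positivity
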